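/- For every n ≥ 3 and all homogeneous v₁,…,v_n ∈ V the following cancellation identity holds: −∑_{k+l=n+1, k,l≥2} (−1)^{l+k(|v₁|+⋯+|v_l|)} λ_l(v₁,…,v_l)·[Qλ_{k−1}(v_{l+1},…,v_n)] + ∑_{k+l=n+1, k,l≥2} (−1)^{l(|v₁|+⋯+|v_{k−1}|)} [Qλ_{k−1}(v₁,…,v_{k−1})]·λ_l(v_k,…,v_n) = 0, where the terms with k = 2 are interpreted via the convention Qλ₁ := −Id. -/

import Mathlib

open Finset

/-- The sign `(-1)^x` for a parity `x : ZMod 2`, valued in a ring `A`. -/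
def sgn {A : Type*} [Ring A] (x : ZMod 2) : A := (-1 : A) ^ x.val

/-- The sum of the first `j` parities, `|v₁| + ⋯ + |v_j|`. -/
def psum (p : ℕ → ZMod 2) (j : ℕ) : ZMod 2 := ∑ i ∈ Finset.range j, p i


lemma sgn_add {A : Type*} [Ring A] (x y : ZMod 2) : (sgn (x+y) : A) = sgn x * sgn y := by
  rw [sgn, sgn, sgn, ZMod.val_add]
  fin_cases x <;> fin_cases y <;>
    simp [sgn, show ((1:ZMod 2)+1).val = 0 from rfl, show (1:ZMod 2).val = 1 from rfl, ZMod.val]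

lemma sgn_left_comm {A : Type*} [Ring A] (x : ZMod 2) (y z : A) :
    y * (sgn x * z) = sgn x * (y * z) := by
  fin_cases x <;> simp [sgn, show (1:ZMod 2).val = 1 from rfl, ZMod.val]

lemma psum_shift (p : ℕ → ZMod 2) (a b : ℕ) :
    psum (fun i => p (a+i)) b = psum p (a+b) - psum p a := by
  unfold psum; rw [Finset.sum_range_add]; abel

/-- `Qλ_n`, with the convention `Qλ₁ := -Id`. -/
def Qlam {A : Type*} [Neg A] (Q : A → A)
    (lam : ℕ → (ℕ → A) → (ℕ → ZMod 2) → A) :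
    ℕ → (ℕ → A) → (ℕ → ZMod 2) → A
  | 1, v, _ => -(v 0)
  | n, v, p => Q (lam n v p)

/-- The tuple obtained from `v` by replacing the block `v_{j+1}, …, v_{j+l}`
of length `l` by the single element `x` (0-indexed: `x` sits at slot `j`). -/
def insE {A : Type*} (v : ℕ → A) (j l : ℕ) (x : A) : ℕ → A :=
  fun i => if i < j then v i else if i = j then x else v (i + l - 1)

/-- The corresponding tuple of parities, where the inserted element has parity `q`. -/
def insP (p : ℕ → ZMod 2) (j l : ℕ) (q : ZMod 2) : ℕ → ZMod 2 :=
  fun i => if i < j then p i else if i = j then q else p (i + l - 1)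

/-- the cancellation identity from the proof of Lemma 1: for
every `n ≥ 3` and all homogeneous `v₁, …, v_n ∈ V`,
`-∑_{k+l=n+1, k,l≥2} (-1)^{l+k(|v₁|+⋯+|v_l|)} λ_l(v₁,…,v_l)·[Qλ_{k-1}(v_{l+1},…,v_n)]
 +∑_{k+l=n+1, k,l≥2} (-1)^{l(|v₁|+⋯+|v_{k-1}|)} [Qλ_{k-1}(v₁,…,v_{k-1})]·λ_l(v_k,…,v_n) = 0`,
where the `k = 2` terms are interpreted via `Qλ₁ := -Id`. -/
theorem cancellation_identity {K A : Type*} [Field K] [Ring A] [Algebra K A]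
    -- `A` is a superalgebra over `K`: a ℤ/2-graded associative algebra
    (𝒜 : ZMod 2 → Submodule K A) [GradedAlgebra 𝒜]
    -- `Q` is an odd linear operator
    (Q : A →ₗ[K] A)
    (hQ : ∀ (i : ZMod 2), ∀ x ∈ 𝒜 i, Q x ∈ 𝒜 (i + 1))
    -- `λ₂(v₁,v₂) = v₁·v₂` and, recursively, `λ_n(v₁,…,v_n) =
    -- -∑ (-1)^{k+(l-1)(|v₁|+⋯+|v_k|)} [Qλ_k(v₁,…,v_k)]·[Qλ_l(v_{k+1},…,v_n)]`
    -- for `n ≥ 3`, with `Qλ₁ := -Id`; here the sum runs over all splittings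
    -- `(v₁,…,v_k), (v_{k+1},…,v_n)` with `k, l ≥ 1` (so `l = n - k`, matching
    -- the arities in the paper's explicit formulae for `λ₃, λ₄, λ₅`)
    (lam : ℕ → (ℕ → A) → (ℕ → ZMod 2) → A)
    (hlam2 : ∀ (v : ℕ → A) (p : ℕ → ZMod 2), lam 2 v p = v 0 * v 1)
    (hlamrec : ∀ n, 3 ≤ n → ∀ (v : ℕ → A) (p : ℕ → ZMod 2),
      lam n v p =
        - ∑ k ∈ Finset.Icc 1 (n - 1),
            sgn ((k : ZMod 2) + (((n - k : ℕ) : ZMod 2) - 1) * psum p k) *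
              (Qlam (⇑Q) lam k v p *
                Qlam (⇑Q) lam (n - k) (fun i => v (k + i)) (fun i => p (k + i))))
    (n : ℕ) (hn : 3 ≤ n) (v : ℕ → A) (p : ℕ → ZMod 2)
    -- `v₁, …, v_n` are homogeneous, `v_i` of parity `p_i`
    (hv : ∀ i < n, v i ∈ 𝒜 (p i)) :
    - (∑ l ∈ Finset.Icc 2 (n - 1),
        sgn ((l : ZMod 2) + ((n + 1 - l : ℕ) : ZMod 2) * psum p l) *
          (lam l v p *
            Qlam (⇑Q) lam (n - l) (fun i => v (l + i)) (fun i => p (l + i))))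
    + ∑ k ∈ Finset.Icc 2 (n - 1),
        sgn (((n + 1 - k : ℕ) : ZMod 2) * psum p (k - 1)) *
          (Qlam (⇑Q) lam (k - 1) v p *
            lam (n + 1 - k) (fun i => v (k - 1 + i)) (fun i => p (k - 1 + i)))
    = 0 := by
  have hrec : ∀ m, 2 ≤ m → ∀ (v : ℕ → A) (p : ℕ → ZMod 2),
      lam m v p =
        - ∑ k ∈ Finset.Icc 1 (m - 1),
            sgn ((k : ZMod 2) + (((m - k : ℕ) : ZMod 2) - 1) * psum p k) *
              (Qlam (⇑Q) lam k v p *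
                Qlam (⇑Q) lam (m - k) (fun i => v (k + i)) (fun i => p (k + i))) := by
    intro m hm v p
    rcases eq_or_lt_of_le hm with h | h
    · subst h
      rw [hlam2]
      norm_num [Qlam, sgn, show ((1:ZMod 2)).val = 1 from rfl]
    · exact hlamrec m h v p
  have key1 : ∀ l ∈ Finset.Icc 2 (n-1),
      sgn ((l : ZMod 2) + ((n + 1 - l : ℕ) : ZMod 2) * psum p l) *
          (lam l v p *
            Qlam (⇑Q) lam (n - l) (fun i => v (l + i)) (fun i => p (l + i)))
      = - ∑ a ∈ Finset.Icc 1 (l - 1),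
          sgn ((l : ZMod 2) + ((n + 1 - l : ℕ) : ZMod 2) * psum p l) *
          (sgn ((a : ZMod 2) + (((l - a : ℕ) : ZMod 2) - 1) * psum p a) *
            (Qlam (⇑Q) lam a v p *
              (Qlam (⇑Q) lam (l - a) (fun i => v (a + i)) (fun i => p (a + i)) *
                Qlam (⇑Q) lam (n - l) (fun i => v (l + i)) (fun i => p (l + i))))) := by
    intro l hl
    simp only [Finset.mem_Icc] at hl
    rw [hrec l hl.1]
    rw [neg_mul, mul_neg, Finset.sum_mul, Finset.mul_sum]
    congr 1
    refine Finset.sum_congr rfl fun a ha => ?_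
    simp only [mul_assoc]
  have key2 : ∀ k ∈ Finset.Icc 2 (n-1),
      sgn (((n + 1 - k : ℕ) : ZMod 2) * psum p (k - 1)) *
          (Qlam (⇑Q) lam (k - 1) v p *
            lam (n + 1 - k) (fun i => v (k - 1 + i)) (fun i => p (k - 1 + i)))
      = - ∑ b ∈ Finset.Icc 1 (n + 1 - k - 1),
          sgn (((n + 1 - k : ℕ) : ZMod 2) * psum p (k - 1)) *
          (sgn ((b : ZMod 2) + (((n + 1 - k - b : ℕ) : ZMod 2) - 1) *
              psum (fun i => p (k - 1 + i)) b) *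
            (Qlam (⇑Q) lam (k - 1) v p *
              (Qlam (⇑Q) lam b (fun i => v (k - 1 + i)) (fun i => p (k - 1 + i)) *
                Qlam (⇑Q) lam (n + 1 - k - b) (fun i => v (k - 1 + (b + i)))
                  (fun i => p (k - 1 + (b + i)))))) := by
    intro k hk
    simp only [Finset.mem_Icc] at hk
    rw [hrec (n+1-k) (by omega)]
    simp only [mul_neg, Finset.mul_sum, neg_mul]
    congr 1
    refine Finset.sum_congr rfl fun b hb => ?_
    rw [sgn_left_comm]
  rw [Finset.sum_congr rfl key1, Finset.sum_congr rfl key2]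
  rw [Finset.sum_neg_distrib, Finset.sum_neg_distrib, neg_neg, add_neg_eq_zero]
  rw [Finset.sum_sigma', Finset.sum_sigma']
  refine Finset.sum_nbij' (i := fun x => (⟨x.2+1, x.1-x.2⟩ : (_ : ℕ) × ℕ))
    (j := fun y => (⟨y.1-1+y.2, y.1-1⟩ : (_ : ℕ) × ℕ)) ?h1 ?h2 ?h3 ?h4 ?h5
  case h1 =>
    rintro ⟨l,a⟩ h
    simp only [Finset.mem_sigma, Finset.mem_Icc] at h ⊢
    omega
  case h2 =>
    rintro ⟨k,b⟩ h
    simp only [Finset.mem_sigma, Finset.mem_Icc] at h ⊢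
    omega
  case h3 =>
    rintro ⟨l,a⟩ h
    simp only [Finset.mem_sigma, Finset.mem_Icc] at h
    show (⟨a+1-1+(l-a), a+1-1⟩ : (_ : ℕ) × ℕ) = ⟨l,a⟩
    rw [Nat.add_sub_cancel, show a+(l-a) = l from by omega]
  case h4 =>
    rintro ⟨k,b⟩ h
    simp only [Finset.mem_sigma, Finset.mem_Icc] at h
    show (⟨k-1+1, k-1+b-(k-1)⟩ : (_ : ℕ) × ℕ) = ⟨k,b⟩
    rw [show k-1+1 = k from by omega, show k-1+b-(k-1) = b from by omega]
  case h5 =>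
    rintro ⟨l,a⟩ hx
    simp only [Finset.mem_sigma, Finset.mem_Icc] at hx
    obtain ⟨⟨hl1, hl2⟩, ha1, ha2⟩ := hx
    simp only [Nat.add_sub_cancel]
    have e1 : n + 1 - (a+1) - (l-a) = n - l := by omega
    have e2 : (fun i => v (a + (l - a + i))) = fun i => v (l + i) :=
      funext fun i => by congr 1; omega
    have e3 : (fun i => p (a + (l - a + i))) = fun i => p (l + i) :=
      funext fun i => by congr 1; omega
    have c1 : ((n + 1 - l : ℕ) : ZMod 2) = (n : ZMod 2) + 1 - (l : ZMod 2) := by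
      rw [Nat.cast_sub (by omega)]; push_cast; ring
    have c2 : ((l - a : ℕ) : ZMod 2) = (l : ZMod 2) - (a : ZMod 2) := by
      rw [Nat.cast_sub (by omega)]
    have c3 : ((n + 1 - (a+1) : ℕ) : ZMod 2) = (n : ZMod 2) - (a : ZMod 2) := by
      rw [Nat.cast_sub (by omega)]; push_cast; ring
    have c4 : ((n - l : ℕ) : ZMod 2) = (n : ZMod 2) - (l : ZMod 2) := by
      rw [Nat.cast_sub (by omega)]
    rw [e1, e2, e3, psum_shift, show a + (l-a) = l from by omega, c1, c2, c3, c4]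
    simp only [← mul_assoc]
    rw [← sgn_add, ← sgn_add]
    congr 4
    generalize psum p l = y
    generalize psum p a = x
    generalize (n : ZMod 2) = N
    generalize (l : ZMod 2) = L
    generalize (a : ZMod 2) = α
    revert N L α x y
    decide
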